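/- Let X be an ℝ^d-valued random vector with E[X] = 0 such that there exists σ' > 0 with E[exp(⟨u, X⟩)] ≤ exp(‖u‖²σ'²) for all u ∈ ℝ^d. Then, setting σ̄ := 24√e · σ', for all λ ∈ ℝ with |λ| ≤ 1/σ̄ one has E[exp(λ²‖X‖²)] ≤ 5^d · exp(λ²σ̄²). -/

import Mathlib

open MeasureTheory ProbabilityTheory Real

/-- If `X` is a mean-zero random vector in `ℝ^d` with
`E[exp ⟨u, X⟩] ≤ exp (‖u‖² σ'²)` for all `u`, then with `σ̄ := 24 √e σ'`, for all
`|λ| ≤ 1/σ̄` one has `E[exp (λ² ‖X‖²)] ≤ 5^d exp (λ² σ̄²)`. -/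


lemma cexp_eq_ofReal (b c x : ℝ) :
    Complex.exp ((b:ℂ)*(x:ℂ)^2 + (c:ℂ)*(x:ℂ) + 0) = ((Real.exp (b*x^2 + c*x) : ℝ) : ℂ) := by
  rw [Complex.ofReal_exp]; push_cast; ring_nf

lemma integrable_exp_quad {b : ℝ} (hb : b < 0) (c : ℝ) :
    Integrable (fun x : ℝ => Real.exp (b*x^2 + c*x)) := by
  have h := (integrable_cexp_quadratic' (b := (b:ℂ)) (by simpa using hb) (c:ℂ) 0).norm
  have : (fun x : ℝ => ‖Complex.exp ((b:ℂ)*(x:ℂ)^2 + (c:ℂ)*(x:ℂ) + 0)‖)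
      = fun x : ℝ => Real.exp (b*x^2 + c*x) := by
    ext x
    rw [cexp_eq_ofReal, Complex.norm_real, Real.norm_eq_abs, abs_of_pos (Real.exp_pos _)]
  rwa [this] at h

lemma integral_exp_quad {b : ℝ} (hb : b < 0) (c : ℝ) :
    ∫ x : ℝ, Real.exp (b*x^2 + c*x) = Real.sqrt (π / -b) * Real.exp (-(c^2) / (4*b)) := by
  have h := integral_cexp_quadratic (b := (b:ℂ)) (by simpa using hb) (c:ℂ) 0
  have h2 : ∫ x : ℝ, Complex.exp ((b:ℂ)*(x:ℂ)^2 + (c:ℂ)*(x:ℂ) + 0)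
      = ((∫ x : ℝ, Real.exp (b*x^2 + c*x) : ℝ) : ℂ) := by
    simp_rw [cexp_eq_ofReal]; exact integral_ofReal
  have h3 : ((π : ℂ) / -(b:ℂ)) ^ (1/2 : ℂ) = ((Real.sqrt (π / -b) : ℝ) : ℂ) := by
    rw [Real.sqrt_eq_rpow, Complex.ofReal_cpow (div_nonneg Real.pi_pos.le (by linarith))]
    push_cast; norm_num
  have h4 : (0 : ℂ) - (c:ℂ)^2/(4*(b:ℂ)) = ((-(c^2)/(4*b) : ℝ) : ℂ) := by push_cast; ring
  rw [h2, h3, h4, ← Complex.ofReal_exp, ← Complex.ofReal_mul] at h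
  exact_mod_cast h

noncomputable def gw (c t : ℝ) : ℝ := (Real.sqrt (2*π))⁻¹ * Real.exp (-(1/2)*t^2 + c*t)

lemma gw_nonneg (c t : ℝ) : 0 ≤ gw c t := by
  unfold gw; positivity

lemma gw_integrable (c : ℝ) : Integrable (gw c) := by
  unfold gw
  exact (integrable_exp_quad (by norm_num : (-(1/2) : ℝ) < 0) c).const_mul _

lemma gw_integral (c : ℝ) : ∫ t, gw c t = Real.exp (c^2/2) := by
  unfold gw
  rw [MeasureTheory.integral_const_mul, integral_exp_quad (by norm_num : (-(1/2):ℝ) < 0)]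
  have h1 : π / -(-(1/2) : ℝ) = 2*π := by ring
  have h2 : -(c^2) / (4*(-(1/2):ℝ)) = c^2/2 := by ring
  rw [h1, h2, ← mul_assoc, inv_mul_cancel₀ (by positivity), one_mul]

lemma gw_split (c t : ℝ) : gw c t = gw 0 t * Real.exp (c*t) := by
  unfold gw
  rw [mul_assoc, ← Real.exp_add]; ring_nf

lemma gw_quarter_integrable : Integrable (fun t : ℝ => gw 0 t * Real.exp (t^2/4)) := by
  have : (fun t : ℝ => gw 0 t * Real.exp (t^2/4))
      = fun t : ℝ => (Real.sqrt (2*π))⁻¹ * Real.exp (-(1/4)*t^2 + 0*t) := by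
    ext t; unfold gw; rw [mul_assoc, ← Real.exp_add]; ring_nf
  rw [this]
  exact (integrable_exp_quad (by norm_num : (-(1/4) : ℝ) < 0) 0).const_mul _

lemma gw_quarter_integral : ∫ t, gw 0 t * Real.exp (t^2/4) = Real.sqrt 2 := by
  have : (fun t : ℝ => gw 0 t * Real.exp (t^2/4))
      = fun t : ℝ => (Real.sqrt (2*π))⁻¹ * Real.exp (-(1/4)*t^2 + 0*t) := by
    ext t; unfold gw; rw [mul_assoc, ← Real.exp_add]; ring_nf
  rw [this, MeasureTheory.integral_const_mul, integral_exp_quad (by norm_num : (-(1/4):ℝ) < 0)]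
  have h1 : π / -(-(1/4) : ℝ) = 4*π := by ring
  have h2 : -((0:ℝ)^2) / (4*(-(1/4):ℝ)) = 0 := by ring
  rw [h1, h2, Real.exp_zero, mul_one, ← Real.sqrt_inv, ← Real.sqrt_mul (by positivity)]
  rw [show (2*π)⁻¹ * (4*π) = 2 by field_simp; ring]
lemma gw_continuous : Continuous fun p : ℝ × ℝ => gw p.1 p.2 := by
  unfold gw; fun_prop

attribute [irreducible] gw

lemma norm_sq_eq {d : ℕ} (x : EuclideanSpace ℝ (Fin d)) : ‖x‖^2 = ∑ i, (x i)^2 := by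
  rw [EuclideanSpace.norm_eq, Real.sq_sqrt (by positivity)]
  simp [sq_abs]

lemma inner_eq {d : ℕ} (u x : EuclideanSpace ℝ (Fin d)) :
    (inner ℝ u x : ℝ) = ∑ i, u i * x i := by
  simp [PiLp.inner_apply, RCLike.inner_apply, conj_trivial, mul_comm]

lemma prod_gw_integrable {d : ℕ} (c : Fin d → ℝ) :
    Integrable (fun g : Fin d → ℝ => ∏ i, gw (c i) (g i)) :=
  Integrable.fintype_prod (f := fun i t => gw (c i) t) (fun i => gw_integrable (c i))

lemma prod_gw_integral {d : ℕ} (c : Fin d → ℝ) :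
    ∫ g : Fin d → ℝ, ∏ i, gw (c i) (g i) = Real.exp (∑ i, (c i)^2 / 2) := by
  rw [integral_fintype_prod_volume_eq_prod (f := fun i t => gw (c i) t)]
  simp_rw [gw_integral, ← Real.exp_sum]

lemma prod_gw_split {d : ℕ} (a : ℝ) (x : EuclideanSpace ℝ (Fin d)) (g : Fin d → ℝ) :
    ∏ i, gw (a * x i) (g i) = (∏ i, gw 0 (g i)) * Real.exp (a * ∑ i, x i * g i) := by
  have h : ∀ i ∈ Finset.univ, gw (a * x i) (g i)
      = gw 0 (g i) * Real.exp ((a * x i) * (g i)) := fun i _ => gw_split _ _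
  rw [Finset.prod_congr rfl h, Finset.prod_mul_distrib, ← Real.exp_sum Finset.univ (fun i => (a * x i) * (g i))]
  congr 1
  rw [Finset.mul_sum]
  congr 1
  apply Finset.sum_congr rfl
  intros
  ring

lemma prod_gw_quarter {d : ℕ} :
    (∫ g : Fin d → ℝ, (∏ i, gw 0 (g i)) * Real.exp ((∑ i, (g i)^2)/4) = (Real.sqrt 2)^d)
    ∧ Integrable (fun g : Fin d → ℝ => (∏ i, gw 0 (g i)) * Real.exp ((∑ i, (g i)^2)/4)) := by
  have he : ∀ g : Fin d → ℝ, (∏ i, gw 0 (g i)) * Real.exp ((∑ i, (g i)^2)/4)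
      = ∏ i, (gw 0 (g i) * Real.exp ((g i)^2/4)) := by
    intro g
    rw [Finset.prod_mul_distrib, ← Real.exp_sum, ← Finset.sum_div]
  constructor
  · simp_rw [he]
    rw [integral_fintype_prod_volume_eq_prod (f := fun _ t => gw 0 t * Real.exp (t^2/4))]
    simp [gw_quarter_integral]
  · simp_rw [he]
    exact Integrable.fintype_prod (f := fun _ t => gw 0 t * Real.exp (t^2/4))
      (fun _ => gw_quarter_integrable)
set_option maxHeartbeats 4000000

theorem stmt1 {d : ℕ} {Ω : Type*} [MeasureSpace Ω] [IsProbabilityMeasure (ℙ : Measure Ω)]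
    (X : Ω → EuclideanSpace ℝ (Fin d)) (hX : Measurable X)
    (σ' : ℝ) (hσ' : 0 < σ')
    (hmean : ∫ ω, X ω = 0)
    (hmgf : ∀ u : EuclideanSpace ℝ (Fin d),
      ∫ ω, Real.exp (inner ℝ u (X ω) : ℝ) ≤ Real.exp (‖u‖ ^ 2 * σ' ^ 2))
    (σbar : ℝ) (hσbar : σbar = 24 * Real.sqrt (Real.exp 1) * σ')
    (l : ℝ) (hl : |l| ≤ 1 / σbar) :
    ∫ ω, Real.exp (l ^ 2 * ‖X ω‖ ^ 2) ≤ (5 : ℝ) ^ d * Real.exp (l ^ 2 * σbar ^ 2) := by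
  have hσb : 0 < σbar := by
    rw [hσbar]; positivity
  have hexp1 : (1:ℝ) ≤ Real.exp (l^2 * σbar^2) := Real.one_le_exp (by positivity)
  have h5d : (1:ℝ) ≤ (5:ℝ)^d := one_le_pow₀ (by norm_num)
  have hRHSpos : (0:ℝ) ≤ (5:ℝ)^d * Real.exp (l^2*σbar^2) := by positivity
  by_cases hInt : Integrable (fun ω => Real.exp (l ^ 2 * ‖X ω‖ ^ 2)) ℙ
  swap
  · rw [integral_undef hInt]; positivity
  by_cases hl0 : l = 0
  · subst hl0
    simp only [ne_eq, OfNat.ofNat_ne_zero, not_false_eq_true, zero_pow, zero_mul, Real.exp_zero,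
      integral_const, measure_univ, ENNReal.toReal_one, probReal_univ, smul_eq_mul, mul_one]
    nlinarith
  -- arithmetic bounds
  have hls : |l| * σbar ≤ 1 := by
    rw [← le_div_iff₀ hσb]; exact hl
  have h1 : l^2 * σbar^2 ≤ 1 := by
    have := mul_le_one₀ hls (by positivity) (le_refl 1)
    nlinarith [sq_abs l, abs_nonneg l, mul_nonneg (abs_nonneg l) hσb.le]
  have hsb2 : σbar^2 = 576 * Real.exp 1 * σ'^2 := by
    rw [hσbar, mul_pow, mul_pow, Real.sq_sqrt (Real.exp_pos 1).le]; ring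
  have hb2 : 2 * l^2 * σ'^2 ≤ 1/4 := by
    have hE : (1:ℝ) ≤ Real.exp 1 := Real.one_le_exp zero_le_one
    rw [hsb2] at h1
    nlinarith [mul_nonneg (sq_nonneg l) (sq_nonneg σ'),
      mul_nonneg (mul_nonneg (sq_nonneg l) (sq_nonneg σ')) (Real.exp_pos 1).le]
  set a : ℝ := Real.sqrt 2 * l with ha
  have ha2 : a^2 = 2 * l^2 := by
    rw [ha, mul_pow, Real.sq_sqrt (by norm_num : (0:ℝ) ≤ 2)]
  -- measurability
  have hml : Measurable fun ω => Real.exp (l^2 * ‖X ω‖^2) := by fun_prop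
  -- Step C : mgf bound in lintegral form
  have hC : ∀ u : EuclideanSpace ℝ (Fin d),
      ∫⁻ ω, ENNReal.ofReal (Real.exp (inner ℝ u (X ω) : ℝ)) ∂ℙ
        ≤ ENNReal.ofReal (Real.exp (‖u‖^2 * σ'^2)) := by
    intro u
    have hmu : Measurable fun ω => Real.exp (inner ℝ u (X ω) : ℝ) :=
      Real.measurable_exp.comp (((continuous_const.inner continuous_id).measurable).comp hX)
    have hl2 : (0:ℝ) < l^2 := by positivity
    have hbnd : ∀ ω, ‖Real.exp (inner ℝ u (X ω) : ℝ)‖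
        ≤ Real.exp (‖u‖^2 / (4*l^2)) * Real.exp (l^2 * ‖X ω‖^2) := by
      intro ω
      rw [Real.norm_eq_abs, abs_of_pos (Real.exp_pos _), ← Real.exp_add]
      apply Real.exp_le_exp.2
      have h2 : (inner ℝ u (X ω) : ℝ) ≤ ‖u‖ * ‖X ω‖ := real_inner_le_norm u (X ω)
      have h3 : ‖u‖ * ‖X ω‖ ≤ ‖u‖^2/(4*l^2) + l^2 * ‖X ω‖^2 := by
        rw [div_add' _ _ _ (by positivity), le_div_iff₀ (by positivity)]
        nlinarith [sq_nonneg (‖u‖ - 2*l^2*‖X ω‖)]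
      linarith
    have hIu : Integrable (fun ω => Real.exp (inner ℝ u (X ω) : ℝ)) ℙ :=
      Integrable.mono (hInt.const_mul (Real.exp (‖u‖^2 / (4*l^2))))
        hmu.aestronglyMeasurable
        (ae_of_all _ (by
          intro ω
          refine (hbnd ω).trans ?_
          rw [Real.norm_eq_abs, abs_of_pos (by positivity)]))
    rw [← ofReal_integral_eq_lintegral_ofReal hIu (ae_of_all _ fun ω => (Real.exp_pos _).le)]
    exact ENNReal.ofReal_le_ofReal (hmgf u)
  -- Step A : Gaussian representation, pointwise
  have hA : ∀ x : EuclideanSpace ℝ (Fin d),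
      ENNReal.ofReal (Real.exp (l^2 * ‖x‖^2))
        = ∫⁻ g : Fin d → ℝ, ENNReal.ofReal (∏ i, gw (a * x i) (g i)) := by
    intro x
    rw [← ofReal_integral_eq_lintegral_ofReal (prod_gw_integrable _)
        (ae_of_all _ fun g => Finset.prod_nonneg fun i _ => gw_nonneg _ _),
      prod_gw_integral]
    congr 1
    rw [norm_sq_eq, Finset.mul_sum]
    congr 1
    apply Finset.sum_congr rfl
    intro i _
    rw [mul_pow, ha2]; ring
  -- joint measurability
  have hmeasF : Measurable fun p : Ω × (Fin d → ℝ) =>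
      ENNReal.ofReal (∏ i, gw (a * X p.1 i) (p.2 i)) := by
    apply ENNReal.measurable_ofReal.comp
    apply Finset.measurable_prod
    intro i _
    have h1 : Measurable fun p : Ω × (Fin d → ℝ) => a * X p.1 i :=
      measurable_const.mul ((measurable_pi_apply i).comp ((WithLp.measurable_ofLp 2 _).comp (hX.comp measurable_fst)))
    have h2 : Measurable fun p : Ω × (Fin d → ℝ) => p.2 i :=
      (measurable_pi_apply i).comp measurable_snd
    exact gw_continuous.measurable.comp (h1.prodMk h2)
  -- per-g bound
  have hGm : ∀ g : Fin d → ℝ, (0:ℝ) ≤ ∏ i, gw 0 (g i) :=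
    fun g => Finset.prod_nonneg fun i _ => gw_nonneg _ _
  have hstep : ∀ g : Fin d → ℝ,
      ∫⁻ ω, ENNReal.ofReal (∏ i, gw (a * X ω i) (g i)) ∂ℙ
        ≤ ENNReal.ofReal ((∏ i, gw 0 (g i)) * Real.exp ((∑ i, (g i)^2)/4)) := by
    intro g
    set u : EuclideanSpace ℝ (Fin d) := (WithLp.equiv 2 (Fin d → ℝ)).symm (fun i => a * g i)
      with hu
    have hui : ∀ i, u i = a * g i := fun i => rfl
    have hinner : ∀ ω, a * ∑ i, X ω i * g i = (inner ℝ u (X ω) : ℝ) := by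
      intro ω
      rw [inner_eq, Finset.mul_sum]
      apply Finset.sum_congr rfl
      intro i _
      rw [hui]; ring
    have hnu : ‖u‖^2 = 2 * l^2 * ∑ i, (g i)^2 := by
      rw [norm_sq_eq, ← ha2, Finset.mul_sum]
      apply Finset.sum_congr rfl
      intro i _
      rw [hui]; ring
    calc ∫⁻ ω, ENNReal.ofReal (∏ i, gw (a * X ω i) (g i)) ∂ℙ
        = ∫⁻ ω, ENNReal.ofReal (∏ i, gw 0 (g i))
            * ENNReal.ofReal (Real.exp (inner ℝ u (X ω) : ℝ)) ∂ℙ := by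
          apply lintegral_congr
          intro ω
          rw [prod_gw_split, ← hinner ω, ENNReal.ofReal_mul (hGm g)]
      _ = ENNReal.ofReal (∏ i, gw 0 (g i))
            * ∫⁻ ω, ENNReal.ofReal (Real.exp (inner ℝ u (X ω) : ℝ)) ∂ℙ := by
          rw [lintegral_const_mul]
          exact ENNReal.measurable_ofReal.comp
            (Real.measurable_exp.comp
              (((continuous_const.inner continuous_id).measurable).comp hX))
      _ ≤ ENNReal.ofReal (∏ i, gw 0 (g i)) * ENNReal.ofReal (Real.exp (‖u‖^2 * σ'^2)) :=
          mul_le_mul_right (hC u) _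
      _ ≤ ENNReal.ofReal ((∏ i, gw 0 (g i)) * Real.exp ((∑ i, (g i)^2)/4)) := by
          rw [← ENNReal.ofReal_mul (hGm g)]
          apply ENNReal.ofReal_le_ofReal
          apply mul_le_mul_of_nonneg_left _ (hGm g)
          apply Real.exp_le_exp.2
          rw [hnu]
          have hsum : (0:ℝ) ≤ ∑ i, (g i)^2 := by positivity
          nlinarith
  -- main chain
  have hmain : ∫⁻ ω, ENNReal.ofReal (Real.exp (l^2 * ‖X ω‖^2)) ∂ℙ
      ≤ ENNReal.ofReal ((5:ℝ)^d * Real.exp (l^2 * σbar^2)) := by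
    calc ∫⁻ ω, ENNReal.ofReal (Real.exp (l^2 * ‖X ω‖^2)) ∂ℙ
        = ∫⁻ ω, ∫⁻ g : Fin d → ℝ, ENNReal.ofReal (∏ i, gw (a * X ω i) (g i)) ∂(volume) ∂ℙ :=
          lintegral_congr fun ω => hA (X ω)
      _ = ∫⁻ g : Fin d → ℝ, ∫⁻ ω, ENNReal.ofReal (∏ i, gw (a * X ω i) (g i)) ∂ℙ ∂(volume) :=
          lintegral_lintegral_swap hmeasF.aemeasurable
      _ ≤ ∫⁻ g : Fin d → ℝ,
            ENNReal.ofReal ((∏ i, gw 0 (g i)) * Real.exp ((∑ i, (g i)^2)/4)) ∂(volume) :=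
          lintegral_mono hstep
      _ = ENNReal.ofReal (Real.sqrt 2 ^ d) := by
          rw [← ofReal_integral_eq_lintegral_ofReal (prod_gw_quarter.2)
            (ae_of_all _ fun g => mul_nonneg (hGm g) (Real.exp_pos _).le), prod_gw_quarter.1]
      _ ≤ ENNReal.ofReal ((5:ℝ)^d * Real.exp (l^2 * σbar^2)) := by
          apply ENNReal.ofReal_le_ofReal
          have h2 : Real.sqrt 2 ^ d ≤ (5:ℝ)^d := by
            apply pow_le_pow_left₀ (Real.sqrt_nonneg 2)
            nlinarith [Real.sq_sqrt (by norm_num : (0:ℝ) ≤ 2), Real.sqrt_nonneg 2]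
          nlinarith [pow_nonneg (Real.sqrt_nonneg 2) d]
  rw [integral_eq_lintegral_of_nonneg_ae (ae_of_all _ fun ω => (Real.exp_pos _).le)
    hml.aestronglyMeasurable]
  exact ENNReal.toReal_le_of_le_ofReal hRHSpos hmain
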